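/- Let b ∈ ℂ, r > 0, and let z, w ∈ ℂ satisfy |z − b| = r and |w − b| > r. Then Re( r² / ( (z − b)·(conj(w) − conj(b)) − r² ) ) = − Re( (z − b) / (z − w) ). -/

import Mathlib

/-- For `|z − b| = r` and `|w − b| > r`:
`Re (r² / ((z − b)(conj w − conj b) − r²)) = − Re ((z − b)/(z − w))`. -/
theorem stmt_13 (b : ℂ) (r : ℝ) (hr : 0 < r) (z w : ℂ)
    (hz : ‖z - b‖ = r) (hw : r < ‖w - b‖) :
    ((r : ℂ) ^ 2 / ((z - b) * ((starRingEnd ℂ) w - (starRingEnd ℂ) b) - (r : ℂ) ^ 2)).re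
      = -(((z - b) / (z - w)).re) := by
  have ha : (z - b) ≠ 0 := by
    intro h; rw [h, norm_zero] at hz; linarith
  have hr2 : (r : ℂ) ^ 2 = (z - b) * (starRingEnd ℂ) (z - b) := by
    rw [Complex.mul_conj, ← Complex.sq_norm, hz]
    norm_cast
  have hzw : z - w = (z - b) - (w - b) := by ring
  rw [hr2]
  have hden : ((z - b) * ((starRingEnd ℂ) w - (starRingEnd ℂ) b)
      - (z - b) * (starRingEnd ℂ) (z - b))
      = (z - b) * ((starRingEnd ℂ) (w - b) - (starRingEnd ℂ) (z - b)) := by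
    simp only [map_sub]; ring
  rw [hden, mul_div_mul_left _ _ ha, ← map_sub, ← map_div₀, Complex.conj_re, hzw,
    ← neg_sub (z - b) (w - b), div_neg, Complex.neg_re]
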